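/- Let σ₁ ≥ σ₂ > 0, and let t̲₂, t̄₁ > 0 satisfy σ₁t̲₂ − σ₂t̄₁ ≥ 0. Define F(t̲₂, t̄₁) = (σ₁t̲₂ − σ₂t̄₁)² / ((σ₁ + σ₂t̄₁²)(σ₂ + σ₁t̲₂²)). Then ∂F/∂t̲₂ ≥ 0 and ∂F/∂t̄₁ ≤ 0 on this domain (with equality exactly when σ₁t̲₂ = σ₂t̄₁). Consequently, over a rectangle [a₂, b₂] × [a₁, b₁] contained in the domain, F is minimized at (t̲₂, t̄₁) = (a₂, b₁). -/

import Mathlib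

lemma hds (σ1 σ2 : ℝ) (h1 : 0 < σ1) (h2 : 0 < σ2) (s t : ℝ) :
    HasDerivAt (fun s' => (σ1 * s' - σ2 * t) ^ 2 / ((σ1 + σ2 * t ^ 2) * (σ2 + σ1 * s' ^ 2)))
      (2 * σ1 * σ2 * (σ1 * s - σ2 * t) * (1 + t * s) /
        ((σ1 + σ2 * t ^ 2) * (σ2 + σ1 * s ^ 2) ^ 2)) s := by
  have hA : 0 < σ1 + σ2 * t ^ 2 := by positivity
  have hB : 0 < σ2 + σ1 * s ^ 2 := by positivity
  have hn : HasDerivAt (fun s' => (σ1 * s' - σ2 * t) ^ 2)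
      (2 * (σ1 * s - σ2 * t) ^ 1 * σ1) s := by
    have h : HasDerivAt (fun s' => σ1 * s' - σ2 * t) σ1 s := by
      simpa using ((hasDerivAt_id s).const_mul σ1).sub_const (σ2 * t)
    simpa using h.fun_pow 2
  have hd : HasDerivAt (fun s' => (σ1 + σ2 * t ^ 2) * (σ2 + σ1 * s' ^ 2))
      ((σ1 + σ2 * t ^ 2) * (σ1 * (2 * s ^ 1))) s := by
    have h : HasDerivAt (fun s' => σ2 + σ1 * s' ^ 2) (σ1 * (2 * s ^ 1)) s := by
      simpa using (((hasDerivAt_id s).pow 2).const_mul σ1).const_add σ2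
    exact h.const_mul _
  have := hn.fun_div hd (by positivity)
  refine this.congr_deriv ?_
  rw [div_eq_div_iff (by positivity) (by positivity)]
  ring

lemma hdt (σ1 σ2 : ℝ) (h1 : 0 < σ1) (h2 : 0 < σ2) (s t : ℝ) :
    HasDerivAt (fun t' => (σ1 * s - σ2 * t') ^ 2 / ((σ1 + σ2 * t' ^ 2) * (σ2 + σ1 * s ^ 2)))
      (-(2 * σ1 * σ2 * (σ1 * s - σ2 * t) * (1 + t * s)) /
        ((σ1 + σ2 * t ^ 2) ^ 2 * (σ2 + σ1 * s ^ 2))) t := by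
  have hA : 0 < σ1 + σ2 * t ^ 2 := by positivity
  have hB : 0 < σ2 + σ1 * s ^ 2 := by positivity
  have hn : HasDerivAt (fun t' => (σ1 * s - σ2 * t') ^ 2)
      (2 * (σ1 * s - σ2 * t) ^ 1 * (-σ2)) t := by
    have h : HasDerivAt (fun t' => σ1 * s - σ2 * t') (-σ2) t := by
      simpa using ((hasDerivAt_id t).const_mul σ2).const_sub (σ1 * s)
    simpa using h.fun_pow 2
  have hd : HasDerivAt (fun t' => (σ1 + σ2 * t' ^ 2) * (σ2 + σ1 * s ^ 2))
      (σ2 * (2 * t ^ 1) * (σ2 + σ1 * s ^ 2)) t := by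
    have h : HasDerivAt (fun t' => σ1 + σ2 * t' ^ 2) (σ2 * (2 * t ^ 1)) t := by
      simpa using (((hasDerivAt_id t).pow 2).const_mul σ2).const_add σ1
    exact h.mul_const _
  have := hn.fun_div hd (by positivity)
  refine this.congr_deriv ?_
  rw [div_eq_div_iff (by positivity) (by positivity)]
  ring

theorem stmt_19 (σ1 σ2 : ℝ) (h12 : σ2 ≤ σ1) (h2 : 0 < σ2)
    (F : ℝ → ℝ → ℝ)
    (hF : ∀ s t, F s t =
      (σ1 * s - σ2 * t) ^ 2 / ((σ1 + σ2 * t ^ 2) * (σ2 + σ1 * s ^ 2))) :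
    (∀ s t : ℝ, 0 < s → 0 < t → 0 ≤ σ1 * s - σ2 * t →
      0 ≤ deriv (fun s' => F s' t) s ∧
      deriv (fun t' => F s t') t ≤ 0 ∧
      (deriv (fun s' => F s' t) s = 0 ↔ σ1 * s = σ2 * t) ∧
      (deriv (fun t' => F s t') t = 0 ↔ σ1 * s = σ2 * t)) ∧
    (∀ a2 b2 a1 b1 : ℝ, 0 < a2 → 0 < a1 → a2 ≤ b2 → a1 ≤ b1 →
      (∀ s ∈ Set.Icc a2 b2, ∀ t ∈ Set.Icc a1 b1, 0 ≤ σ1 * s - σ2 * t) →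
      ∀ s ∈ Set.Icc a2 b2, ∀ t ∈ Set.Icc a1 b1, F a2 b1 ≤ F s t) := by
  have h1 : 0 < σ1 := lt_of_lt_of_le h2 h12
  have hFs : ∀ s t : ℝ, deriv (fun s' => F s' t) s =
      2 * σ1 * σ2 * (σ1 * s - σ2 * t) * (1 + t * s) /
        ((σ1 + σ2 * t ^ 2) * (σ2 + σ1 * s ^ 2) ^ 2) := by
    intro s t
    have := hds σ1 σ2 h1 h2 s t
    have heq : (fun s' => F s' t) = fun s' =>
        (σ1 * s' - σ2 * t) ^ 2 / ((σ1 + σ2 * t ^ 2) * (σ2 + σ1 * s' ^ 2)) := by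
      funext s'; exact hF s' t
    rw [heq]; exact this.deriv
  have hFt : ∀ s t : ℝ, deriv (fun t' => F s t') t =
      -(2 * σ1 * σ2 * (σ1 * s - σ2 * t) * (1 + t * s)) /
        ((σ1 + σ2 * t ^ 2) ^ 2 * (σ2 + σ1 * s ^ 2)) := by
    intro s t
    have := hdt σ1 σ2 h1 h2 s t
    have heq : (fun t' => F s t') = fun t' =>
        (σ1 * s - σ2 * t') ^ 2 / ((σ1 + σ2 * t' ^ 2) * (σ2 + σ1 * s ^ 2)) := by
      funext t'; exact hF s t'
    rw [heq]; exact this.deriv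
  constructor
  · intro s t hs ht hst
    have hts : 0 < 1 + t * s := by positivity
    have hA : 0 < σ1 + σ2 * t ^ 2 := by positivity
    have hB : 0 < σ2 + σ1 * s ^ 2 := by positivity
    have hc : 0 < 2 * σ1 * σ2 * (1 + t * s) := by positivity
    refine ⟨?_, ?_, ?_, ?_⟩
    · rw [hFs]; positivity
    · rw [hFt]
      apply div_nonpos_of_nonpos_of_nonneg
      · nlinarith
      · positivity
    · rw [hFs]
      rw [div_eq_zero_iff]
      constructor
      · rintro (h | h)
        · nlinarith
        · exact absurd h (by positivity)
      · intro h; left; rw [h]; ring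
    · rw [hFt]
      rw [div_eq_zero_iff]
      constructor
      · rintro (h | h)
        · nlinarith
        · exact absurd h (by positivity)
      · intro h; left; rw [h]; ring
  · intro a2 b2 a1 b1 ha2 ha1 hab2 hab1 hdom s hs t ht
    -- F is monotone in s on [a2,b2] for fixed t ∈ [a1,b1], antitone in t on [a1,b1] for fixed s
    have key1 : ∀ t ∈ Set.Icc a1 b1, MonotoneOn (fun s' => F s' t) (Set.Icc a2 b2) := by
      intro t htm
      apply monotoneOn_of_deriv_nonneg (convex_Icc a2 b2)
      · apply ContinuousOn.congr (f := fun s' =>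
          (σ1 * s' - σ2 * t) ^ 2 / ((σ1 + σ2 * t ^ 2) * (σ2 + σ1 * s' ^ 2)))
        · apply ContinuousOn.div
          · fun_prop
          · fun_prop
          · intro x _
            have : 0 < σ1 + σ2 * t ^ 2 := by positivity
            have : 0 < σ2 + σ1 * x ^ 2 := by positivity
            positivity
        · intro x _; exact hF x t
      · intro x hx
        exact ((hds σ1 σ2 h1 h2 x t).congr_of_eventuallyEq
          (Filter.Eventually.of_forall fun y => hF y t)).differentiableAt.differentiableWithinAt
      · intro x hx
        rw [interior_Icc] at hx
        have hxI : x ∈ Set.Icc a2 b2 := Set.Ioo_subset_Icc_self hx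
        have hd := hdom x hxI t htm
        rw [hFs]
        have hx0 : 0 < x := lt_of_lt_of_le ha2 hxI.1
        have ht0 : 0 < t := lt_of_lt_of_le ha1 htm.1
        positivity
    have key2 : ∀ s ∈ Set.Icc a2 b2, AntitoneOn (fun t' => F s t') (Set.Icc a1 b1) := by
      intro s hsm
      apply antitoneOn_of_deriv_nonpos (convex_Icc a1 b1)
      · apply ContinuousOn.congr (f := fun t' =>
          (σ1 * s - σ2 * t') ^ 2 / ((σ1 + σ2 * t' ^ 2) * (σ2 + σ1 * s ^ 2)))
        · apply ContinuousOn.div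
          · fun_prop
          · fun_prop
          · intro x _
            have : 0 < σ1 + σ2 * x ^ 2 := by positivity
            have : 0 < σ2 + σ1 * s ^ 2 := by positivity
            positivity
        · intro x _; exact hF s x
      · intro x hx
        exact ((hdt σ1 σ2 h1 h2 s x).congr_of_eventuallyEq
          (Filter.Eventually.of_forall fun y => hF s y)).differentiableAt.differentiableWithinAt
      · intro x hx
        rw [interior_Icc] at hx
        have hxI : x ∈ Set.Icc a1 b1 := Set.Ioo_subset_Icc_self hx
        have hd := hdom s hsm x hxI
        rw [hFt]
        apply div_nonpos_of_nonpos_of_nonneg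
        · have hx0 : 0 < x := lt_of_lt_of_le ha1 hxI.1
          have hs0 : 0 < s := lt_of_lt_of_le ha2 hsm.1
          have hnn : 0 ≤ 2 * σ1 * σ2 * (σ1 * s - σ2 * x) * (1 + x * s) :=
            mul_nonneg (mul_nonneg (by positivity) hd) (by positivity)
          linarith
        · positivity
    have ha2m : a2 ∈ Set.Icc a2 b2 := ⟨le_refl _, hab2⟩
    have hb1m : b1 ∈ Set.Icc a1 b1 := ⟨hab1, le_refl _⟩
    calc F a2 b1 ≤ F a2 t := key2 a2 ha2m ht hb1m ht.2
      _ ≤ F s t := key1 t ht ha2m hs hs.1
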